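/- For every k ∈ {1,…,n} and all 1 ≤ i < i′ ≤ n, one has f_k(v_{i,η_k} + r_{i,η_k}·(1,1)) ≤ f_k(v_{i′,η_k} + r_{i′,η_k}·(1,1)). -/

import Mathlib

open Finset

/-- `Λ_{2,n}`: pairs `α ∈ ℕ²` with `1 ≤ α₁ + α₂ ≤ n`. -/
def Lam2 (n : ℕ) : Finset (ℕ × ℕ) :=
  ((range (n+1)) ×ˢ (range (n+1))).filter (fun α => 1 ≤ α.1 + α.2 ∧ α.1 + α.2 ≤ n)

/-- `v̄ ∈ ℂ^{Λ_{2,n}}`, with `α`-coordinate `C(v₁,α₁)·C(v₂,α₂)`. -/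
noncomputable def vbar (n : ℕ) (v : ℕ × ℕ) : (Lam2 n) → ℂ :=
  fun α => ((v.1.choose α.1.1 * v.2.choose α.1.2 : ℕ) : ℂ)

/-- `Λ_{3,n}`: triples `β ∈ ℕ³` with `1 ≤ β₁ + β₂ + β₃ ≤ n`. -/
def Lam3 (n : ℕ) : Finset (ℕ × ℕ × ℕ) :=
  ((range (n+1)) ×ˢ (range (n+1)) ×ˢ (range (n+1))).filter
    (fun β => 1 ≤ β.1 + β.2.1 + β.2.2 ∧ β.1 + β.2.1 + β.2.2 ≤ n)

/-- The linear map `A_n : ℕ³ → ℕ²` with matrix rows `(1,1,n)` and `(0,1,n+1)`. -/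
def Amap (n : ℕ) (β : ℕ × ℕ × ℕ) : ℕ × ℕ :=
  (β.1 + β.2.1 + n * β.2.2, β.2.1 + (n+1) * β.2.2)

/-- `c_β = Σ_{γ ≤ β} (−1)^{|β−γ|} C(β,γ) (A_nγ)‾`. -/
noncomputable def cvec (n : ℕ) (β : ℕ × ℕ × ℕ) : (Lam2 n) → ℂ :=
  ∑ γ ∈ (range (β.1+1)) ×ˢ (range (β.2.1+1)) ×ˢ (range (β.2.2+1)),
    (((-1 : ℂ) ^ ((β.1 + β.2.1 + β.2.2) - (γ.1 + γ.2.1 + γ.2.2))) *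
      ((β.1.choose γ.1 * β.2.1.choose γ.2.1 * β.2.2.choose γ.2.2 : ℕ) : ℂ)) •
      vbar n (Amap n γ)

/-- `J ∈ S_{A_n}`: `J ⊆ Λ_{3,n}`, `|J| = λ_{2,n}`, `det L^c_J ≠ 0`. -/
def memSA (n : ℕ) (J : Finset (ℕ × ℕ × ℕ)) : Prop :=
  J ⊆ Lam3 n ∧ J.card = (Lam2 n).card ∧
    ∀ e : (Lam2 n) ≃ J,
      (Matrix.of fun i j : (Lam2 n) => cvec n (e i).1 j).det ≠ 0

/-- `m_J = Σ_{β ∈ J} A_nβ`. -/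
def mJ (n : ℕ) (J : Finset (ℕ × ℕ × ℕ)) : ℕ × ℕ := ∑ β ∈ J, Amap n β

/-- `f_k(v) = k·v₁ + (1−k)·v₂`. -/
def fk (k : ℕ) (v : ℕ × ℕ) : ℤ := (k : ℤ) * v.1 + (1 - (k : ℤ)) * v.2

/-- Data of a sequence `η = (z, d₀, d₁, …, d_r)`. -/
structure OmegaData where
  r : ℕ
  z : Bool
  d : ℕ → ℕ

/-- `η ∈ Ω`: `d₀ = 0`, `d_i ≥ 1` for `1 ≤ i ≤ r` (and `d_i = 0` beyond `r`),
and `d₀ + ⋯ + d_r = n`. -/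
def OmegaData.IsOmega (n : ℕ) (η : OmegaData) : Prop :=
  η.d 0 = 0 ∧ (∀ i, 1 ≤ i → i ≤ η.r → 1 ≤ η.d i) ∧
  (∀ i, η.r < i → η.d i = 0) ∧
  (∑ i ∈ range (η.r + 1), η.d i) = n

/-- The unique `t` with `Σ_{i=0}^{t−1} d_i < j ≤ Σ_{i=0}^{t} d_i`. -/
noncomputable def tIdx (η : OmegaData) (j : ℕ) : ℕ :=
  sInf {t | j ≤ ∑ i ∈ range (t+1), η.d i}

/-- The vector `v_{j,η} ∈ ℕ²`. -/
noncomputable def vvec (η : OmegaData) (j : ℕ) : ℕ × ℕ :=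
  let t := tIdx η j
  let c := j - ∑ i ∈ range t, η.d i
  let a := (∑ i ∈ range t, if (Odd i ↔ Odd t) then η.d i else 0) + c
  if (η.z = true) ↔ Odd t then (a, 0) else (0, a)

/-- `T_{j,η}` for `1 ≤ j ≤ n`, and `T_{0,η} = {(1,1),…,(n,n)}`. -/
noncomputable def Tj (n : ℕ) (η : OmegaData) (j : ℕ) : Finset (ℕ × ℕ) :=
  if j = 0 then (range n).image (fun q => (q+1, q+1))
  else (range (n - j + 1)).image (fun p => vvec η j + (p, p))

/-- `T_η = ⋃_{j=0}^{n} T_{j,η}`. -/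
noncomputable def Tset (n : ℕ) (η : OmegaData) : Finset (ℕ × ℕ) :=
  (range (n+1)).biUnion (fun j => Tj n η j)

/-- `r_{i,η} = n·π₂(v_{i,η})`. -/
noncomputable def rshift (n : ℕ) (η : OmegaData) (i : ℕ) : ℕ := n * (vvec η i).2

/-- `T'_η = T_{0,η} ∪ ⋃_{i=1}^{n} (T_{i,η} + r_{i,η})`. -/
noncomputable def Tset' (n : ℕ) (η : OmegaData) : Finset (ℕ × ℕ) :=
  Tj n η 0 ∪ (Finset.Icc 1 n).biUnion
    (fun i => (Tj n η i).image (fun v => v + (rshift n η i, rshift n η i)))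

/-- `J_η`: the (unique) subset of `Λ_{3,n}` with `A_n(J_η) = T'_η`. -/
noncomputable def Jset (n : ℕ) (η : OmegaData) : Finset (ℕ × ℕ × ℕ) :=
  (Lam3 n).filter (fun β => Amap n β ∈ Tset' n η)

/-- `z_k = 1` iff `f_k((1,0)) ≤ f_k((n,n+1))`. -/
def zk (n k : ℕ) : Bool := decide (fk k (1, 0) ≤ fk k (n, n+1))

/-- `t_l` in the recursive definition of `η_k`, where `O`, `E` are the odd- and
even-indexed partial sums `Σ_{j<l, j odd} d_{k,j}` and `Σ_{j<l, j even} d_{k,j}`. -/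
noncomputable def tval (n k : ℕ) (l O E : ℕ) : ℕ :=
  let w := (if Odd l then E else O) + 1
  if ((zk n k = true) ↔ Odd l) then
    sSup {m : ℕ | (m : ℤ) * fk k (1, 0) ≤ fk k (w * n, w * (n+1))}
  else
    sSup {m : ℕ | (m : ℤ) * fk k (n, n+1) ≤ fk k (w, 0)}

/-- The pair `(Σ_{j≤l, j odd} d_{k,j}, Σ_{j≤l, j even} d_{k,j})` of the recursion
defining `η_k`. -/
noncomputable def oeSums (n k : ℕ) : ℕ → ℕ × ℕ
  | 0 => (0, 0)
  | l + 1 =>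
    let p := oeSums n k l
    let O := p.1
    let E := p.2
    let S := O + E
    let dnext := if S < n then
        min (n - S) (tval n k (l+1) O E - (if Odd (l+1) then O else E))
      else 0
    if Odd (l+1) then (O + dnext, E) else (O, E + dnext)

/-- `d_{k,l}`. -/
noncomputable def dk (n k : ℕ) : ℕ → ℕ
  | 0 => 0
  | l + 1 =>
    let p := oeSums n k l
    let O := p.1
    let E := p.2
    let S := O + E
    if S < n then
      min (n - S) (tval n k (l+1) O E - (if Odd (l+1) then O else E))
    else 0

/-- `η_k = (z_k, d_{k,0}, …, d_{k,r})`, where `r` is the first index with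
`Σ_{j=0}^{r} d_{k,j} = n`. -/
noncomputable def etak (n k : ℕ) : OmegaData :=
  { r := sInf {r | ∑ j ∈ range (r+1), dk n k j = n},
    z := zk n k,
    d := dk n k }


namespace Stmt17Aux

open Finset

/-- The "rate" of block `l`: `k` or `n+1-k` depending on `z_k` and parity. -/
noncomputable def rate (n k l : ℕ) : ℤ :=
  if ((zk n k = true) ↔ Odd l) then (k : ℤ) else (n : ℤ) + 1 - k

/-- The other rate. -/
noncomputable def orate (n k l : ℕ) : ℤ :=
  if ((zk n k = true) ↔ Odd l) then (n : ℤ) + 1 - k else (k : ℤ)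

lemma rate_pos {n k : ℕ} (hk1 : 1 ≤ k) (hkn : k ≤ n) (l : ℕ) : 1 ≤ rate n k l := by
  unfold rate; split_ifs <;> omega

lemma orate_pos {n k : ℕ} (hk1 : 1 ≤ k) (hkn : k ≤ n) (l : ℕ) : 1 ≤ orate n k l := by
  unfold orate; split_ifs <;> omega

lemma rate_succ (n k l : ℕ) : rate n k (l+1) = orate n k l := by
  by_cases hz : zk n k = true <;> by_cases ho : Odd l <;>
    simp [rate, orate, hz, ho, Nat.odd_add_one]

lemma orate_succ (n k l : ℕ) : orate n k (l+1) = rate n k l := by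
  by_cases hz : zk n k = true <;> by_cases ho : Odd l <;>
    simp [rate, orate, hz, ho, Nat.odd_add_one]

lemma fk_10 (k : ℕ) : fk k (1,0) = (k:ℤ) := by simp [fk]
lemma fk_nn1 (n k w : ℕ) : fk k (w*n, w*(n+1)) = (w:ℤ) * ((n:ℤ)+1-k) := by
  simp [fk]; ring
lemma fk_w0 (k w : ℕ) : fk k (w, 0) = (w:ℤ) * k := by simp [fk]; ring
lemma fk_n : ∀ n k : ℕ, fk k (n, n+1) = (n:ℤ)+1-k := by
  intro n k; simp [fk]; ring

lemma zk_iff (n k : ℕ) : zk n k = true ↔ (k:ℤ) ≤ (n:ℤ)+1-k := by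
  rw [zk, decide_eq_true_iff, fk_10, fk_n]

lemma tval_eq (n k l O E : ℕ) :
    tval n k l O E =
      sSup {m : ℕ | (m : ℤ) * rate n k l ≤
        (((if Odd l then E else O : ℕ) : ℤ) + 1) * orate n k l} := by
  by_cases hz : zk n k = true <;> by_cases ho : Odd l <;>
    simp only [tval, rate, orate, hz, ho, if_true, if_false, iff_true, iff_false,
      true_iff, false_iff, fk_10, fk_nn1, fk_w0, fk_n, not_false_iff, not_true,
      eq_self_iff_true] <;>
    · apply congrArg sSup
      ext m
      simp

lemma sSup_spec {a c : ℤ} (ha : 1 ≤ a) (hc : 0 ≤ c) :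
    ((sSup {m : ℕ | (m:ℤ) * a ≤ c} : ℕ) : ℤ) * a ≤ c ∧
    ∀ m : ℕ, (m:ℤ) * a ≤ c → m ≤ sSup {m : ℕ | (m:ℤ) * a ≤ c} := by
  have hne : {m : ℕ | (m:ℤ) * a ≤ c}.Nonempty := ⟨0, by simpa using hc⟩
  have hbdd : BddAbove {m : ℕ | (m:ℤ) * a ≤ c} := by
    refine ⟨c.toNat, fun m hm => ?_⟩
    have h1 : (m:ℤ) ≤ (m:ℤ) * a := le_mul_of_one_le_right (by positivity) ha
    have h2 : (m:ℤ) ≤ c := le_trans h1 hm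
    exact (Int.le_toNat hc).mpr h2
  exact ⟨Nat.sSup_mem hne hbdd, fun m hm => le_csSup hbdd hm⟩

/-! ### Bookkeeping for `oeSums` -/

noncomputable def Ol (n k l : ℕ) : ℕ := (oeSums n k l).1
noncomputable def El (n k l : ℕ) : ℕ := (oeSums n k l).2
noncomputable def Sl (n k l : ℕ) : ℕ := Ol n k l + El n k l

lemma oeSums_succ (n k l : ℕ) : oeSums n k (l+1) =
    if Odd (l+1) then (Ol n k l + dk n k (l+1), El n k l)
    else (Ol n k l, El n k l + dk n k (l+1)) := by
  simp only [oeSums, dk, Ol, El]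

lemma Ol_succ (n k l : ℕ) :
    Ol n k (l+1) = if Odd (l+1) then Ol n k l + dk n k (l+1) else Ol n k l := by
  rw [Ol, oeSums_succ]; split_ifs <;> rfl

lemma El_succ (n k l : ℕ) :
    El n k (l+1) = if Odd (l+1) then El n k l else El n k l + dk n k (l+1) := by
  rw [El, oeSums_succ]; split_ifs <;> rfl

lemma dk_succ (n k l : ℕ) : dk n k (l+1) =
    if Sl n k l < n then
      min (n - Sl n k l)
        (tval n k (l+1) (Ol n k l) (El n k l) -
          (if Odd (l+1) then Ol n k l else El n k l))
    else 0 := by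
  simp only [dk, Sl, Ol, El]
  rfl

lemma Sl_succ (n k l : ℕ) : Sl n k (l+1) = Sl n k l + dk n k (l+1) := by
  simp only [Sl, Ol_succ, El_succ]; split_ifs <;> omega

lemma Sl_zero (n k : ℕ) : Sl n k 0 = 0 := rfl

lemma Sl_le (n k : ℕ) : ∀ l, Sl n k l ≤ n := by
  intro l
  induction l with
  | zero => simp [Sl_zero]
  | succ l ih =>
    rcases le_or_gt n (Sl n k l) with h | h
    · rw [Sl_succ, dk_succ, if_neg (by omega)]; omega
    · rw [Sl_succ, dk_succ, if_pos h]
      have := min_le_left (n - Sl n k l) (tval n k (l+1) (Ol n k l) (El n k l) -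
        (if Odd (l+1) then Ol n k l else El n k l))
      omega

lemma Sl_mono (n k : ℕ) : Monotone (Sl n k) :=
  monotone_nat_of_le_succ (fun l => by rw [Sl_succ]; omega)

/-! ### The invariant -/

noncomputable def sIdx (n k l : ℕ) : ℕ := if Odd (l+1) then Ol n k l else El n k l
noncomputable def oIdx (n k l : ℕ) : ℕ := if Odd (l+1) then El n k l else Ol n k l

lemma sIdx_def (n k l : ℕ) :
    sIdx n k l = if Odd (l+1) then Ol n k l else El n k l := rfl

lemma dk_succ' (n k l : ℕ) : dk n k (l+1) =
    if Sl n k l < n then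
      min (n - Sl n k l) (tval n k (l+1) (Ol n k l) (El n k l) - sIdx n k l)
    else 0 := dk_succ n k l

lemma sIdx_succ (n k l : ℕ) : sIdx n k (l+1) = oIdx n k l := by
  unfold sIdx oIdx
  have h2 : Odd (l+1+1) ↔ ¬ Odd (l+1) := Nat.odd_add_one
  by_cases ho : Odd (l+1) <;> simp [Ol_succ, El_succ, ho, h2]

lemma oIdx_succ (n k l : ℕ) : oIdx n k (l+1) = sIdx n k l + dk n k (l+1) := by
  unfold sIdx oIdx
  have h2 : Odd (l+1+1) ↔ ¬ Odd (l+1) := Nat.odd_add_one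
  by_cases ho : Odd (l+1) <;> simp [Ol_succ, El_succ, ho, h2]

lemma tval_succ_eq (n k l : ℕ) :
    tval n k (l+1) (Ol n k l) (El n k l) =
      sSup {m : ℕ | (m : ℤ) * rate n k (l+1) ≤
        ((oIdx n k l : ℤ) + 1) * orate n k (l+1)} := by
  rw [tval_eq]; rfl

lemma tval_facts {n k : ℕ} (hk1 : 1 ≤ k) (hkn : k ≤ n) (l : ℕ) :
    ((tval n k (l+1) (Ol n k l) (El n k l) : ℕ) : ℤ) * rate n k (l+1) ≤
        ((oIdx n k l : ℤ) + 1) * orate n k (l+1) ∧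
      ∀ m : ℕ, (m : ℤ) * rate n k (l+1) ≤ ((oIdx n k l : ℤ) + 1) * orate n k (l+1) →
        m ≤ tval n k (l+1) (Ol n k l) (El n k l) := by
  rw [tval_succ_eq]
  exact sSup_spec (rate_pos hk1 hkn _)
    (mul_nonneg (by positivity) (le_trans zero_le_one (orate_pos hk1 hkn _)))

/-- The invariant: at the start of block `l+1`, one more step at the current
rate stays below the next value on the other side. -/
def Inv (n k l : ℕ) : Prop :=
  ((sIdx n k l : ℤ) + 1) * rate n k (l+1) ≤ ((oIdx n k l : ℤ) + 1) * orate n k (l+1)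

lemma inv_main {n k : ℕ} (hk1 : 1 ≤ k) (hkn : k ≤ n) :
    ∀ l, Sl n k l < n → Inv n k l := by
  intro l
  induction l with
  | zero =>
    intro _
    have h0 : Ol n k 0 = 0 := rfl
    have h1 : El n k 0 = 0 := rfl
    have hodd : Odd (0+1) := odd_one
    have hro : rate n k (0+1) ≤ orate n k (0+1) := by
      unfold rate orate
      by_cases hz : zk n k = true
      · rw [if_pos (by simp [hz, hodd]), if_pos (by simp [hz, hodd])]
        exact (zk_iff n k).mp hz
      · rw [if_neg (by simp [hz, hodd]), if_neg (by simp [hz, hodd])]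
        have hle : ¬ ((k:ℤ) ≤ (n:ℤ)+1-k) := fun h => hz ((zk_iff n k).mpr h)
        push_neg at hle
        linarith
    simp only [Inv, sIdx, oIdx, h0, h1, ite_self]
    push_cast
    linarith
  | succ l ih =>
    intro hS'
    have hSl : Sl n k l < n := lt_of_le_of_lt (Sl_mono n k (Nat.le_succ l)) hS'
    have hinv := ih hSl
    have hr : 1 ≤ rate n k (l+1) := rate_pos hk1 hkn _
    obtain ⟨htm, htmax⟩ := tval_facts hk1 hkn l
    set T := tval n k (l+1) (Ol n k l) (El n k l) with hT
    have hs1 : sIdx n k l + 1 ≤ T := htmax _ (by push_cast; exact hinv)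
    have hdk : dk n k (l+1) = min (n - Sl n k l) (T - sIdx n k l) := by
      rw [dk_succ', if_pos hSl]
    have hSs : Sl n k (l+1) = Sl n k l + dk n k (l+1) := Sl_succ n k l
    have hmin1 := min_le_left (n - Sl n k l) (T - sIdx n k l)
    have hmin2 := min_le_right (n - Sl n k l) (T - sIdx n k l)
    have hminc := min_choice (n - Sl n k l) (T - sIdx n k l)
    have hdeq : sIdx n k l + dk n k (l+1) = T := by omega
    have hTmax : ((oIdx n k l : ℤ) + 1) * orate n k (l+1) < ((T:ℤ)+1) * rate n k (l+1) := by
      by_contra hcon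
      push_neg at hcon
      have := htmax (T+1) (by push_cast; linarith)
      omega
    unfold Inv
    rw [orate_succ, rate_succ, sIdx_succ, oIdx_succ, hdeq]
    linarith

lemma dk_pos {n k : ℕ} (hk1 : 1 ≤ k) (hkn : k ≤ n) (l : ℕ) (h : Sl n k l < n) :
    1 ≤ dk n k (l+1) := by
  have hinv := inv_main hk1 hkn l h
  obtain ⟨htm, htmax⟩ := tval_facts hk1 hkn l
  have hs1 : sIdx n k l + 1 ≤ tval n k (l+1) (Ol n k l) (El n k l) :=
    htmax _ (by push_cast; exact hinv)
  rw [dk_succ', if_pos h]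
  omega

/-! ### Reaching `n` -/

lemma sum_dk (n k : ℕ) : ∀ l, ∑ j ∈ range (l+1), dk n k j = Sl n k l
  | 0 => by simp [Sl_zero, dk]
  | l+1 => by rw [Finset.sum_range_succ, sum_dk n k l, Sl_succ]

lemma Sl_reach {n k : ℕ} (hk1 : 1 ≤ k) (hkn : k ≤ n) : Sl n k n = n := by
  have key : ∀ l, Sl n k l = n ∨ l ≤ Sl n k l := by
    intro l
    induction l with
    | zero => right; omega
    | succ l ih =>
      rcases Nat.lt_or_ge (Sl n k l) n with h | h
      · have h1 := dk_pos hk1 hkn l h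
        have h2 := Sl_succ n k l
        have h3 := Sl_le n k (l+1)
        omega
      · have h2 := Sl_le n k l
        have h3 := Sl_succ n k l
        have h4 := Sl_le n k (l+1)
        omega
  have h := Sl_le n k n
  rcases key n with h1 | h1 <;> omega

lemma etak_d (n k : ℕ) : (etak n k).d = dk n k := rfl
lemma etak_z (n k : ℕ) : (etak n k).z = zk n k := rfl

lemma Sl_R {n k : ℕ} (hk1 : 1 ≤ k) (hkn : k ≤ n) : Sl n k ((etak n k).r) = n := by
  have hset : {r | ∑ j ∈ range (r+1), dk n k j = n}.Nonempty :=
    ⟨n, by simp only [Set.mem_setOf_eq, sum_dk]; exact Sl_reach hk1 hkn⟩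
  have h2 : ∑ j ∈ range ((etak n k).r + 1), dk n k j = n := Nat.sInf_mem hset
  rw [sum_dk] at h2
  exact h2

/-! ### `tIdx` facts -/

lemma tIdx_eq (n k j : ℕ) : tIdx (etak n k) j = sInf {t | j ≤ Sl n k t} := by
  unfold tIdx
  congr 1
  ext t
  simp only [Set.mem_setOf_eq, etak_d, sum_dk]

lemma tIdx_le (n k j t : ℕ) (h : j ≤ Sl n k t) : tIdx (etak n k) j ≤ t := by
  rw [tIdx_eq]
  exact Nat.sInf_le h

lemma tIdx_facts {n k : ℕ} (hk1 : 1 ≤ k) (hkn : k ≤ n) (j : ℕ) (hj1 : 1 ≤ j)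
    (hjn : j ≤ n) :
    1 ≤ tIdx (etak n k) j ∧ j ≤ Sl n k (tIdx (etak n k) j) ∧
      Sl n k (tIdx (etak n k) j - 1) < j := by
  rw [tIdx_eq]
  have hne : {t | j ≤ Sl n k t}.Nonempty := ⟨(etak n k).r, by
    simp only [Set.mem_setOf_eq, Sl_R hk1 hkn]; omega⟩
  have hmem := Nat.sInf_mem hne
  simp only [Set.mem_setOf_eq] at hmem
  have h1 : 1 ≤ sInf {t | j ≤ Sl n k t} := by
    rcases Nat.eq_zero_or_pos (sInf {t | j ≤ Sl n k t}) with h | h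
    · rw [h, Sl_zero] at hmem
      omega
    · exact h
  have h3 := Nat.notMem_of_lt_sInf
    (show sInf {t | j ≤ Sl n k t} - 1 < sInf {t | j ≤ Sl n k t} by omega)
  simp only [Set.mem_setOf_eq] at h3
  exact ⟨h1, hmem, by omega⟩

/-! ### Parity sums -/

lemma Ol_eq_sum (n k : ℕ) : ∀ l,
    Ol n k l = ∑ j ∈ range (l+1), (if Odd j then dk n k j else 0)
  | 0 => by simp [show Ol n k 0 = 0 from rfl]
  | l+1 => by
    rw [Finset.sum_range_succ, ← Ol_eq_sum n k l, Ol_succ]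
    split_ifs with h <;> simp [h]

lemma El_eq_sum (n k : ℕ) : ∀ l,
    El n k l = ∑ j ∈ range (l+1), (if Odd j then 0 else dk n k j)
  | 0 => by simp [show El n k 0 = 0 from rfl, dk]
  | l+1 => by
    rw [Finset.sum_range_succ, ← El_eq_sum n k l, El_succ]
    split_ifs with h <;> simp [h]

lemma parity_sum (n k l : ℕ) :
    (∑ i ∈ range (l+1), if (Odd i ↔ Odd (l+1)) then dk n k i else 0)
      = if Odd (l+1) then Ol n k l else El n k l := by
  by_cases ho : Odd (l+1)
  · rw [if_pos ho, Ol_eq_sum]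
    exact Finset.sum_congr rfl (fun i _ => by simp [ho])
  · rw [if_neg ho, El_eq_sum]
    refine Finset.sum_congr rfl (fun i _ => ?_)
    by_cases hi : Odd i <;> simp [hi, ho]

/-! ### The value formula -/

lemma g_formula {n k : ℕ} (hk1 : 1 ≤ k) (hkn : k ≤ n) (j : ℕ) (hj1 : 1 ≤ j)
    (hjn : j ≤ n) :
    fk k (vvec (etak n k) j + (rshift n (etak n k) j, rshift n (etak n k) j)) =
      rate n k (tIdx (etak n k) j) *
        (((if Odd (tIdx (etak n k) j) then Ol n k (tIdx (etak n k) j - 1)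
            else El n k (tIdx (etak n k) j - 1)) +
          (j - Sl n k (tIdx (etak n k) j - 1)) : ℕ) : ℤ) := by
  obtain ⟨hT1, hTle, hTgt⟩ := tIdx_facts hk1 hkn j hj1 hjn
  obtain ⟨l, hTl⟩ : ∃ l, tIdx (etak n k) j = l + 1 := ⟨tIdx (etak n k) j - 1, by omega⟩
  have hdsum : ∑ i ∈ range (l+1), (etak n k).d i = Sl n k l := by
    rw [etak_d, sum_dk]
  have hpsum : (∑ i ∈ range (l+1), if (Odd i ↔ Odd (l+1)) then (etak n k).d i else 0)
      = if Odd (l+1) then Ol n k l else El n k l := by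
    rw [etak_d]; exact parity_sum n k l
  have hv : vvec (etak n k) j =
      if (zk n k = true) ↔ Odd (l+1) then
        ((if Odd (l+1) then Ol n k l else El n k l) + (j - Sl n k l), 0)
      else (0, (if Odd (l+1) then Ol n k l else El n k l) + (j - Sl n k l)) := by
    simp only [vvec]
    rw [hTl, etak_z, hpsum, hdsum]
  rw [hTl, show l+1-1 = l from rfl, rshift, hv]
  by_cases hb : (zk n k = true) ↔ Odd (l+1)
  · have hrate : rate n k (l+1) = (k:ℤ) := by unfold rate; rw [if_pos hb]
    rw [if_pos hb, hrate]
    simp only [fk, Prod.fst_add, Prod.snd_add]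
    push_cast
    ring
  · have hrate : rate n k (l+1) = (n:ℤ)+1-k := by unfold rate; rw [if_neg hb]
    rw [if_neg hb, hrate]
    simp only [fk, Prod.fst_add, Prod.snd_add]
    push_cast
    ring

/-! ### The consecutive step -/

lemma g_step {n k : ℕ} (hn : 1 ≤ n) (hk1 : 1 ≤ k) (hkn : k ≤ n) (i : ℕ)
    (hi1 : 1 ≤ i) (hin : i + 1 ≤ n) :
    fk k (vvec (etak n k) i + (rshift n (etak n k) i, rshift n (etak n k) i)) ≤
    fk k (vvec (etak n k) (i+1) +
      (rshift n (etak n k) (i+1), rshift n (etak n k) (i+1))) := by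
  obtain ⟨hT1, hTle, hTgt⟩ := tIdx_facts hk1 hkn i hi1 (by omega)
  obtain ⟨hT'1, hT'le, hT'gt⟩ := tIdx_facts hk1 hkn (i+1) (by omega) hin
  rw [g_formula hk1 hkn i hi1 (by omega), g_formula hk1 hkn (i+1) (by omega) hin]
  have hTT' : tIdx (etak n k) i ≤ tIdx (etak n k) (i+1) :=
    tIdx_le n k i _ (by omega)
  by_cases hcase : i + 1 ≤ Sl n k (tIdx (etak n k) i)
  · have hTeq : tIdx (etak n k) (i+1) = tIdx (etak n k) i :=
      le_antisymm (tIdx_le n k (i+1) _ hcase) hTT'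
    rw [hTeq]
    exact mul_le_mul_of_nonneg_left (Nat.cast_le.mpr (by omega))
      (by linarith [rate_pos hk1 hkn (tIdx (etak n k) i)])
  · obtain ⟨l, hTl⟩ : ∃ l, tIdx (etak n k) i = l + 1 :=
      ⟨tIdx (etak n k) i - 1, by omega⟩
    rw [hTl] at hTle hTgt hcase
    simp only [Nat.add_sub_cancel] at hTgt
    have hiSl : i = Sl n k (l+1) := by omega
    have hSlT : Sl n k (l+1) < n := by omega
    have hSll : Sl n k l < n := lt_of_le_of_lt (Sl_mono n k (Nat.le_succ l)) hSlT
    have hd1 : 1 ≤ dk n k (l+1+1) := dk_pos hk1 hkn (l+1) hSlT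
    have hT'eq : tIdx (etak n k) (i+1) = l + 1 + 1 := by
      have hub : tIdx (etak n k) (i+1) ≤ l+1+1 :=
        tIdx_le n k (i+1) _ (by rw [Sl_succ]; omega)
      have hlb : l + 1 < tIdx (etak n k) (i+1) := by
        by_contra hcon
        push_neg at hcon
        have h5 := Sl_mono n k hcon
        omega
      omega
    have hc : i - Sl n k l = dk n k (l+1) := by
      have h5 := Sl_succ n k l
      omega
    rw [hTl, hT'eq]
    simp only [Nat.add_sub_cancel]
    rw [← sIdx_def n k l, ← sIdx_def n k (l+1), sIdx_succ, rate_succ n k (l+1),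
      show i + 1 - Sl n k (l+1) = 1 from by omega, hc]
    obtain ⟨htm, htmax⟩ := tval_facts hk1 hkn l
    have hinv := inv_main hk1 hkn l hSll
    have hs1 : sIdx n k l + 1 ≤ tval n k (l+1) (Ol n k l) (El n k l) :=
      htmax _ (by push_cast; exact hinv)
    have hdk : dk n k (l+1) =
        min (n - Sl n k l) (tval n k (l+1) (Ol n k l) (El n k l) - sIdx n k l) := by
      rw [dk_succ', if_pos hSll]
    have hmin2 := min_le_right (n - Sl n k l)
      (tval n k (l+1) (Ol n k l) (El n k l) - sIdx n k l)
    have hsd : sIdx n k l + dk n k (l+1) ≤ tval n k (l+1) (Ol n k l) (El n k l) := by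
      omega
    have hr := rate_pos hk1 hkn (l+1)
    calc rate n k (l+1) * ((sIdx n k l + dk n k (l+1) : ℕ) : ℤ)
        ≤ rate n k (l+1) * ((tval n k (l+1) (Ol n k l) (El n k l) : ℕ) : ℤ) :=
          mul_le_mul_of_nonneg_left (Nat.cast_le.mpr hsd) (by linarith)
      _ ≤ ((oIdx n k l : ℤ) + 1) * orate n k (l+1) := by linarith [htm]
      _ = orate n k (l+1) * ((oIdx n k l + 1 : ℕ) : ℤ) := by push_cast; ring

end Stmt17Aux

theorem stmt17 (n : ℕ) (hn : 1 ≤ n) (k : ℕ) (hk1 : 1 ≤ k) (hkn : k ≤ n)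
    (i i' : ℕ) (hi1 : 1 ≤ i) (hii' : i < i') (hi'n : i' ≤ n) :
    fk k (vvec (etak n k) i + (rshift n (etak n k) i, rshift n (etak n k) i)) ≤
    fk k (vvec (etak n k) i' + (rshift n (etak n k) i', rshift n (etak n k) i')) := by
  have key : ∀ m : ℕ, i < m → m ≤ n →
      fk k (vvec (etak n k) i + (rshift n (etak n k) i, rshift n (etak n k) i)) ≤
      fk k (vvec (etak n k) m + (rshift n (etak n k) m, rshift n (etak n k) m)) := by
    intro m
    induction m with
    | zero => intro h1 _; exact absurd h1 (by omega)
    | succ m ih =>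
      intro h1 h2
      rcases Nat.lt_or_ge i m with h | h
      · exact le_trans (ih h (by omega))
          (Stmt17Aux.g_step hn hk1 hkn m (by omega) h2)
      · have hm : m = i := by omega
        subst hm
        exact Stmt17Aux.g_step hn hk1 hkn m hi1 h2
  exact key i' hii' hi'n
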